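/- Let n be a positive natural number, t0 a real number, and let e : ℝ → ℝⁿ (Euclidean norm) and δ : ℝ → ℝⁿ be continuous on [t0, ∞) with e(t0) = 0. Suppose there exist constants c1, c2, c3, c4 > 0 and a function v : ℝ → ℝ, differentiable on [t0, ∞), such that for all t ≥ t0: c1·‖e(t)‖² ≤ v(t) ≤ c2·‖e(t)‖² and v'(t) ≤ −c3·‖e(t)‖² + c4·‖e(t)‖·‖δ(t)‖. Then for all t ≥ t0, ‖e(t)‖ ≤ (c4/(2·c1)) · ∫_{t0}^t exp(−(t−s)·c3/(2·c2)) · ‖δ(s)‖ ds. -/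

import Mathlib

open Set MeasureTheory intervalIntegral Topology

set_option maxHeartbeats 1000000 in
/-- Proposition 2 of the paper: BIBO-type bound for the error of an
event-triggered system, with the converse-Lyapunov hypotheses made explicit. -/
theorem stmt_0 (n : ℕ) (hn : 0 < n) (t0 : ℝ)
    (e δ : ℝ → EuclideanSpace ℝ (Fin n))
    (he : ContinuousOn e (Set.Ici t0)) (hδ : ContinuousOn δ (Set.Ici t0))
    (he0 : e t0 = 0)
    (c1 c2 c3 c4 : ℝ) (hc1 : 0 < c1) (hc2 : 0 < c2) (hc3 : 0 < c3) (hc4 : 0 < c4)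
    (v v' : ℝ → ℝ)
    (hv : ∀ t ≥ t0, HasDerivAt v (v' t) t)
    (hlow : ∀ t ≥ t0, c1 * ‖e t‖ ^ 2 ≤ v t)
    (hupp : ∀ t ≥ t0, v t ≤ c2 * ‖e t‖ ^ 2)
    (hdiss : ∀ t ≥ t0, v' t ≤ -c3 * ‖e t‖ ^ 2 + c4 * ‖e t‖ * ‖δ t‖) :
    ∀ t ≥ t0,
      ‖e t‖ ≤ (c4 / (2 * c1)) *
        ∫ s in t0..t, Real.exp (-(t - s) * c3 / (2 * c2)) * ‖δ s‖ := by
  intro t ht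
  set α : ℝ := c3 / (2 * c2) with hα
  have hα0 : 0 < α := by positivity
  have hsc : (0:ℝ) < Real.sqrt c1 := Real.sqrt_pos.2 hc1
  have hss : Real.sqrt c1 * Real.sqrt c1 = c1 := Real.mul_self_sqrt hc1.le
  set C : ℝ := c4 / (2 * Real.sqrt c1) with hC
  have hC0 : 0 < C := by positivity
  -- continuity of the forcing term
  have hf : ContinuousOn (fun u => Real.exp (α * u) * ‖δ u‖) (Ici t0) :=
    ((Real.continuous_exp.comp (continuous_const.mul continuous_id)).continuousOn).mul hδ.norm
  set I : ℝ := ∫ s in t0..t, Real.exp (-(t - s) * c3 / (2 * c2)) * ‖δ s‖ with hI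
  set G : ℝ → ℝ := fun x => ∫ u in t0..x, Real.exp (α * u) * ‖δ u‖ with hG
  -- the target integral in primitive form
  have hIG : I = Real.exp (-(α * t)) * G t := by
    rw [hI, hG, ← intervalIntegral.integral_const_mul]
    apply intervalIntegral.integral_congr
    intro s _
    dsimp only
    rw [← mul_assoc, ← Real.exp_add]
    congr 1
    rw [hα]; ring
  refine le_of_forall_pos_le_add ?_
  intro η hη
  set ε : ℝ := (η * Real.sqrt c1) ^ 2 with hε
  have hε0 : 0 < ε := by positivity
  have hsqε : Real.sqrt ε = η * Real.sqrt c1 := Real.sqrt_sq (by positivity)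
  set w : ℝ → ℝ := fun x => Real.sqrt (v x + ε) with hw
  have hv0 : ∀ s ≥ t0, 0 ≤ v s := fun s hs => le_trans (by positivity) (hlow s hs)
  have hvε : ∀ s ≥ t0, 0 < v s + ε := fun s hs => by linarith [hv0 s hs]
  have hwpos : ∀ s ≥ t0, 0 < w s := fun s hs => Real.sqrt_pos.2 (hvε s hs)
  have hwsq : ∀ s ≥ t0, w s ^ 2 = v s + ε := fun s hs => Real.sq_sqrt (hvε s hs).le
  have hwge : ∀ s ≥ t0, Real.sqrt ε ≤ w s := fun s hs =>
    Real.sqrt_le_sqrt (by linarith [hv0 s hs])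
  have hele : ∀ s ≥ t0, Real.sqrt c1 * ‖e s‖ ≤ w s := by
    intro s hs
    have h1 : (Real.sqrt c1 * ‖e s‖) ^ 2 ≤ v s + ε := by
      have := hlow s hs
      nlinarith [Real.sq_sqrt hc1.le, norm_nonneg (e s)]
    calc Real.sqrt c1 * ‖e s‖ = Real.sqrt ((Real.sqrt c1 * ‖e s‖) ^ 2) :=
          (Real.sqrt_sq (by positivity)).symm
      _ ≤ Real.sqrt (v s + ε) := Real.sqrt_le_sqrt h1
      _ = w s := rfl
  have hw' : ∀ s ≥ t0, HasDerivAt w (v' s / (2 * w s)) s := fun s hs =>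
    ((hv s hs).add_const ε).sqrt (ne_of_gt (hvε s hs))
  -- the key differential inequality
  have hkey : ∀ s ≥ t0, v' s / (2 * w s) ≤ -α * (w s - Real.sqrt ε) + C * ‖δ s‖ := by
    intro s hs
    rw [div_le_iff₀ (mul_pos two_pos (hwpos s hs))]
    have hA : c3 / c2 * v s ≤ c3 * ‖e s‖ ^ 2 := by
      rw [div_mul_eq_mul_div, div_le_iff₀ hc2]
      nlinarith [hupp s hs]
    have hB : c4 * ‖e s‖ * ‖δ s‖ ≤ c4 / Real.sqrt c1 * (w s * ‖δ s‖) := by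
      have h1 : c4 * ‖e s‖ ≤ c4 / Real.sqrt c1 * w s := by
        rw [div_mul_eq_mul_div, le_div_iff₀ hsc]
        nlinarith [hele s hs]
      nlinarith [norm_nonneg (δ s)]
    have hCC : ε ≤ Real.sqrt ε * w s := by
      nlinarith [hwge s hs, Real.sq_sqrt hε0.le, Real.sqrt_nonneg ε]
    have hexp : (-α * (w s - Real.sqrt ε) + C * ‖δ s‖) * (2 * w s)
        = -(c3 / c2) * (w s ^ 2) + c3 / c2 * (Real.sqrt ε * w s)
          + c4 / Real.sqrt c1 * (w s * ‖δ s‖) := by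
      rw [hα, hC]; field_simp; ring
    rw [hexp, hwsq s hs]
    have h3 : (0:ℝ) < c3 / c2 := by positivity
    have := hdiss s hs
    nlinarith [mul_le_mul_of_nonneg_left hCC h3.le]
  -- the decreasing auxiliary function
  set g : ℝ → ℝ := fun x => Real.exp (α * x) * (w x - Real.sqrt ε) - C * G x with hg
  have hginterior : ∀ s ∈ Ioo t0 t, HasDerivAt g
      (Real.exp (α * s) * α * (w s - Real.sqrt ε)
        + Real.exp (α * s) * (v' s / (2 * w s))
        - C * (Real.exp (α * s) * ‖δ s‖)) s := by
    intro s hs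
    have hs0 : t0 ≤ s := hs.1.le
    have hexp' : HasDerivAt (fun x => Real.exp (α * x)) (Real.exp (α * s) * α) s := by
      simpa using ((hasDerivAt_id s).const_mul α).exp
    have hintG : IntervalIntegrable (fun u => Real.exp (α * u) * ‖δ u‖) volume t0 s := by
      apply ContinuousOn.intervalIntegrable
      apply hf.mono
      rw [uIcc_of_le hs0]
      exact Icc_subset_Ici_self
    have hmeas : StronglyMeasurableAtFilter (fun u => Real.exp (α * u) * ‖δ u‖) (𝓝 s) volume :=
      (hf.mono Ioi_subset_Ici_self).stronglyMeasurableAtFilter isOpen_Ioi s hs.1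
    have hcont : ContinuousAt (fun u => Real.exp (α * u) * ‖δ u‖) s :=
      hf.continuousAt (Ici_mem_nhds hs.1)
    have hG' : HasDerivAt G (Real.exp (α * s) * ‖δ s‖) s :=
      intervalIntegral.integral_hasDerivAt_right hintG hmeas hcont
    have h1 := (hexp'.mul ((hw' s hs0).sub_const (Real.sqrt ε))).sub (hG'.const_mul C)
    exact h1
  have hgder : ∀ s ∈ Ioo t0 t, deriv g s ≤ 0 := by
    intro s hs
    rw [(hginterior s hs).deriv]
    have hkey' := hkey s hs.1.le
    have hepos := Real.exp_pos (α * s)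
    nlinarith [mul_le_mul_of_nonneg_left hkey' hepos.le]
  have hgcont : ContinuousOn g (Icc t0 t) := by
    apply ContinuousOn.sub
    · apply ContinuousOn.mul
      · exact (Real.continuous_exp.comp (continuous_const.mul continuous_id)).continuousOn
      · apply ContinuousOn.sub _ continuousOn_const
        intro x hx
        exact (((hv x hx.1).continuousAt.continuousWithinAt).add continuousWithinAt_const).sqrt
    · have hint : IntegrableOn (fun u => Real.exp (α * u) * ‖δ u‖) (uIcc t0 t) volume := by
        apply (hf.mono _).integrableOn_compact isCompact_uIcc
        rw [uIcc_of_le ht]; exact Icc_subset_Ici_self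
      have h := intervalIntegral.continuousOn_primitive_interval hint
      rw [uIcc_of_le ht] at h
      exact continuousOn_const.mul h
  have hmono : AntitoneOn g (Icc t0 t) := by
    apply antitoneOn_of_deriv_nonpos (convex_Icc t0 t) hgcont
    · rw [interior_Icc]
      exact fun s hs => (hginterior s hs).differentiableAt.differentiableWithinAt
    · rw [interior_Icc]; exact hgder
  have hgt : g t ≤ g t0 := hmono ⟨le_refl t0, ht⟩ ⟨ht, le_refl t⟩ ht
  have hgt0 : g t0 ≤ 0 := by
    have hvt0 : v t0 ≤ 0 := by
      have := hupp t0 (le_refl t0)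
      rw [he0] at this; simpa using this
    have hwt0 : w t0 ≤ Real.sqrt ε := Real.sqrt_le_sqrt (by linarith)
    have : G t0 = 0 := intervalIntegral.integral_same
    rw [hg]; simp only [this, mul_zero, sub_zero]
    exact mul_nonpos_of_nonneg_of_nonpos (Real.exp_pos _).le (by linarith)
  -- conclude
  have hEt : (0:ℝ) < Real.exp (α * t) := Real.exp_pos _
  have hGt : G t = Real.exp (α * t) * I := by
    rw [hIG, ← mul_assoc, ← Real.exp_add]
    simp
  have hkey2 : w t - Real.sqrt ε ≤ C * I := by
    have h1 : Real.exp (α * t) * (w t - Real.sqrt ε) - C * G t ≤ 0 := by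
      have := hgt.trans hgt0; rwa [hg] at this
    rw [hGt] at h1
    nlinarith
  have h2 : Real.sqrt c1 * ‖e t‖ ≤ w t := hele t ht
  have hCdiv : C / Real.sqrt c1 = c4 / (2 * c1) := by
    rw [hC, div_div, mul_assoc, hss]
  have h3 : ‖e t‖ ≤ (η * Real.sqrt c1 + C * I) / Real.sqrt c1 := by
    rw [le_div_iff₀ hsc]
    nlinarith [hkey2, h2, hsqε]
  calc ‖e t‖ ≤ (η * Real.sqrt c1 + C * I) / Real.sqrt c1 := h3
    _ = η + (C / Real.sqrt c1) * I := by field_simp; try ring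
    _ = c4 / (2 * c1) * I + η := by rw [hCdiv]; ring
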